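/- For 1 < α < 2 with dom Ψ = ℝ_{< c_α}, the maximizer of z ↦ cz − D_Ψ(z|x) over dom Ψ equals Φ'(c + Ψ'(x)) = ln_{α,c}(c + exp_{α,c}(x)), where Ψ'(x) = exp_{α,c}(x) and Φ' = ln_{α,c} is the inverse of Ψ' on the appropriate domains; consequently L_Ψ(c, x) = ln_{α,c}(c + exp_{α,c}(x)) is well defined for all x < c_α and c > 0, recovering the extended logistic loss. -/

import Mathlib

/-- For 1 < α < 2: exp_{α,c}(x) = ((1-α)(x - c_α))^{1/(1-α)} (real power;
(1-α)(x-c_α) > 0 for x < c_α). -/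
noncomputable def extExpC (α cα x : ℝ) : ℝ := ((1 - α) * (x - cα)) ^ (1 / (1 - α))

/-- For 1 < α < 2: ln_{α,c}(y) = c_α - y^{1-α}/(α-1) on ℝ₊₊. -/
noncomputable def extLnC (α cα y : ℝ) : ℝ := cα - y ^ (1 - α) / (α - 1)

/-- Ψ(x) = (1/(2-α))((1-α)(x - c_α))^{(2-α)/(1-α)}. -/
noncomputable def PsiC (α cα x : ℝ) : ℝ :=
  (1 / (2 - α)) * ((1 - α) * (x - cα)) ^ ((2 - α) / (1 - α))

/-- Bregman divergence D_Ψ(z|x) = Ψ(z) - Ψ(x) - Ψ'(x)(z - x), Ψ' = exp_{α,c}. -/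
noncomputable def DPsi (α cα z x : ℝ) : ℝ :=
  PsiC α cα z - PsiC α cα x - extExpC α cα x * (z - x)

section Aux
open Real Set

variable {α cα : ℝ}

lemma aux_u_pos (h1 : 1 < α) {t : ℝ} (ht : t < cα) : 0 < (1 - α) * (t - cα) :=
  mul_pos_of_neg_of_neg (by linarith) (by linarith)

lemma aux_extExp_pos (h1 : 1 < α) {t : ℝ} (ht : t < cα) : 0 < extExpC α cα t :=
  Real.rpow_pos_of_pos (aux_u_pos h1 ht) _

lemma aux_hasDerivAt_Psi (h1 : 1 < α) (h2 : α < 2) {t : ℝ} (ht : t < cα) :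
    HasDerivAt (PsiC α cα) (extExpC α cα t) t := by
  have hu : 0 < (1 - α) * (t - cα) := aux_u_pos h1 ht
  have hder : HasDerivAt (fun s : ℝ => (1 - α) * (s - cα)) (1 - α) t := by
    simpa using ((hasDerivAt_id t).sub_const cα).const_mul (1 - α)
  have hpow := (Real.hasDerivAt_rpow_const
    (p := (2 - α) / (1 - α)) (Or.inl hu.ne')).comp t hder
  have := hpow.const_mul (1 / (2 - α))
  refine this.congr_deriv ?_
  symm
  have h1α : (1 : ℝ) - α ≠ 0 := by linarith
  have h2α : (2 : ℝ) - α ≠ 0 := by linarith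
  have hexp : (2 - α) / (1 - α) - 1 = 1 / (1 - α) := by field_simp; ring
  rw [extExpC, ← hexp]
  field_simp

lemma aux_strictMono (h1 : 1 < α) : StrictMonoOn (extExpC α cα) (Iio cα) := by
  intro s hs t ht hst
  simp only [mem_Iio] at hs ht
  have hut : 0 < (1 - α) * (t - cα) := aux_u_pos h1 ht
  have hlt : (1 - α) * (t - cα) < (1 - α) * (s - cα) := by nlinarith
  exact Real.rpow_lt_rpow_of_neg hut hlt
    (by apply div_neg_of_pos_of_neg one_pos; linarith)

lemma aux_strictConvex (h1 : 1 < α) (h2 : α < 2) :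
    StrictConvexOn ℝ (Iio cα) (PsiC α cα) := by
  apply StrictMonoOn.strictConvexOn_of_deriv (convex_Iio cα)
  · exact fun t ht => (aux_hasDerivAt_Psi h1 h2 ht).continuousAt.continuousWithinAt
  · rw [interior_Iio]
    intro s hs t ht hst
    rw [(aux_hasDerivAt_Psi h1 h2 hs).deriv, (aux_hasDerivAt_Psi h1 h2 ht).deriv]
    exact aux_strictMono h1 hs ht hst

/-- Bregman strict inequality. -/
lemma aux_bregman (h1 : 1 < α) (h2 : α < 2) {w z : ℝ} (hw : w < cα) (hz : z < cα)
    (hne : z ≠ w) :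
    PsiC α cα w + extExpC α cα w * (z - w) < PsiC α cα z := by
  have hfc := aux_strictConvex (cα := cα) h1 h2
  have hd := aux_hasDerivAt_Psi (cα := cα) h1 h2 hw
  rcases lt_or_gt_of_ne hne with h | h
  · have := hfc.slope_lt_of_hasDerivAt hz hw h hd
    rw [slope_def_field] at this
    have hne' : w - z > 0 := by linarith
    rw [div_lt_iff₀ hne'] at this
    nlinarith
  · have := hfc.lt_slope_of_hasDerivAt hw hz h hd
    rw [slope_def_field] at this
    have hne' : z - w > 0 := by linarith
    rw [lt_div_iff₀ hne'] at this
    nlinarith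

end Aux

/-- For 1 < α < 2, c > 0, c_α = c^{1-α}/(α-1) and dom Ψ = ℝ_{<c_α}: the
maximizer of z ↦ cz - D_Ψ(z|x) over dom Ψ is ln_{α,c}(c + exp_{α,c}(x)), which
lies in dom Ψ; hence L_Ψ(c,x) = ln_{α,c}(c + exp_{α,c}(x)) is well defined for
all x < c_α, recovering the extended logistic loss. -/
theorem stmt19 (α c : ℝ) (h1 : 1 < α) (h2 : α < 2) (hc : 0 < c) (x : ℝ)
    (hx : x < c ^ (1 - α) / (α - 1)) :
    let cα : ℝ := c ^ (1 - α) / (α - 1)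
    extLnC α cα (c + extExpC α cα x) ∈ Set.Iio cα ∧
    IsMaxOn (fun z => c * z - DPsi α cα z x) (Set.Iio cα)
      (extLnC α cα (c + extExpC α cα x)) ∧
    (∀ z ∈ Set.Iio cα, c * z - DPsi α cα z x =
        c * extLnC α cα (c + extExpC α cα x) -
          DPsi α cα (extLnC α cα (c + extExpC α cα x)) x →
      z = extLnC α cα (c + extExpC α cα x)) := by
  intro cα
  have hE : 0 < extExpC α cα x := aux_extExp_pos h1 hx
  set E := extExpC α cα x with hEdef
  have hy : (0:ℝ) < c + E := by linarith
  set y := c + E with hydef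
  set w := extLnC α cα y with hwdef
  have h1α : (1 : ℝ) - α ≠ 0 := by linarith
  -- w < cα
  have hw : w < cα := by
    have : 0 < y ^ (1 - α) / (α - 1) :=
      div_pos (Real.rpow_pos_of_pos hy _) (by linarith)
    simp only [hwdef, extLnC]
    linarith
  -- Ψ'(w) = y
  have hkey : extExpC α cα w = y := by
    have hα' : α - 1 ≠ 0 := by linarith
    have hu : (1 - α) * (w - cα) = y ^ (1 - α) := by
      simp only [hwdef, extLnC]
      field_simp
      ring
    rw [extExpC, hu, ← Real.rpow_mul hy.le, mul_one_div_cancel h1α, Real.rpow_one]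
  -- the difference identity
  have hdiff : ∀ z : ℝ,
      (c * w - DPsi α cα w x) - (c * z - DPsi α cα z x) =
        PsiC α cα z - (PsiC α cα w + extExpC α cα w * (z - w)) := by
    intro z
    simp only [DPsi, hkey, hydef, ← hEdef]
    ring
  refine ⟨hw, ?_, ?_⟩
  · intro z hz
    simp only [Set.mem_Iio] at hz
    simp only [Set.mem_setOf_eq]
    rcases eq_or_ne z w with rfl | hne
    · exact le_refl _
    · have hb := aux_bregman h1 h2 hw hz hne
      have := hdiff z
      linarith
  · intro z hz heq
    simp only [Set.mem_Iio] at hz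
    by_contra hne
    have hb := aux_bregman h1 h2 hw hz hne
    have := hdiff z
    rw [heq] at this
    linarith
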